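/- For all natural numbers r and all a, b with 0 ≤ a, b ≤ r, one has a!·(r−a)!·(C(b,a) + C(r−b,r−a)) = b!·(r−b)!·(C(a,b) + C(r−a,r−b)), where C(m,n) denotes the binomial coefficient (equal to 0 when n > m). Equivalently, the matrix Φ with entries Φ_{ab} = C(b,a) + C(r−b,r−a) becomes symmetric after conjugation by the diagonal matrix D with entries D_{kk} = √(k!(r−k)!). -/
import Mathlib

lemma phi_aux (r a b : ℕ) (ha : a ≤ r) (hb : b ≤ r) :
    Nat.factorial a * Nat.factorial (r - a) * Nat.choose b a =
      Nat.factorial b * Nat.factorial (r - b) * Nat.choose (r - a) (r - b) := by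
  rcases le_or_gt a b with h | h
  · have h' : r - b ≤ r - a := Nat.sub_le_sub_left h r
    have hd : (r - a) - (r - b) = b - a := by omega
    have e1 : Nat.choose b a * Nat.factorial a * Nat.factorial (b - a) = Nat.factorial b :=
      Nat.choose_mul_factorial_mul_factorial h
    have e2 : Nat.choose (r - a) (r - b) * Nat.factorial (r - b) * Nat.factorial (b - a) =
        Nat.factorial (r - a) := by
      rw [← hd]; exact Nat.choose_mul_factorial_mul_factorial h'
    have := Nat.factorial_pos (b - a)
    apply Nat.eq_of_mul_eq_mul_right this
    calc Nat.factorial a * Nat.factorial (r - a) * Nat.choose b a * Nat.factorial (b - a)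
        = (Nat.choose b a * Nat.factorial a * Nat.factorial (b - a)) * Nat.factorial (r - a) := by
          ring
      _ = Nat.factorial b * Nat.factorial (r - a) := by rw [e1]
      _ = Nat.factorial b * (Nat.choose (r - a) (r - b) * Nat.factorial (r - b) *
            Nat.factorial (b - a)) := by rw [e2]
      _ = Nat.factorial b * Nat.factorial (r - b) * Nat.choose (r - a) (r - b) *
            Nat.factorial (b - a) := by ring
  · rw [Nat.choose_eq_zero_of_lt h, Nat.choose_eq_zero_of_lt (by omega), mul_zero, mul_zero]

theorem phi_conj_symmetric (r a b : ℕ) (ha : a ≤ r) (hb : b ≤ r) :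
    Nat.factorial a * Nat.factorial (r - a) *
        (Nat.choose b a + Nat.choose (r - b) (r - a)) =
      Nat.factorial b * Nat.factorial (r - b) *
        (Nat.choose a b + Nat.choose (r - a) (r - b)) := by
  have h1 := phi_aux r a b ha hb
  have h2 := phi_aux r b a hb ha
  have h2' : Nat.factorial a * Nat.factorial (r - a) * Nat.choose (r - b) (r - a) =
      Nat.factorial b * Nat.factorial (r - b) * Nat.choose a b := by
    linarith [h2]
  rw [mul_add, mul_add, h1, h2']; ring
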